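/- Proposition 1: Let C be a nontrivial extended cyclic code (exponent set S_C ≠ {0}) of length 2^m, and let k_D denote the dimension of its cyclic derivative descendant D(C). Then k_D ≤ Σ_{i=0}^{deg(S_C)−1} binom(m, i). -/

import Mathlib

/-- Hamming weight of the `m`-bit binary expansion of `s`. -/
def wtm (m s : ℕ) : ℕ := ((Finset.range m).filter fun j => s.testBit j).card

/-- `Pset s`: the set of nonnegative integers whose binary expansion is
properly covered by that of `s`. -/
def Pset (s : ℕ) : Finset ℕ :=
  (Finset.range (s + 1)).filter fun k => k ||| s = s ∧ k ≠ s

/-- The cyclotomic coset `C_s` modulo `n = 2^m - 1`. -/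
def cycCoset (n m s : ℕ) : Finset ℕ := (Finset.range m).image fun j => 2 ^ j * s % n

/-- `cc S`: union of all cyclotomic cosets meeting `S`. -/
def ccSet (n m : ℕ) (S : Finset ℕ) : Finset ℕ := S.biUnion (cycCoset n m)

/-- `cr S`: the set of coset representatives (minimal elements of the cosets) of `S`. -/
def crSet (n m : ℕ) (S : Finset ℕ) : Finset ℕ :=
  (ccSet n m S).filter fun s => ∀ t ∈ cycCoset n m s, s ≤ t

/-- `S` is an exponent set: a set of residues mod `n` closed under doubling mod `n`. -/
def IsExpSet (n : ℕ) (S : Finset ℕ) : Prop :=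
  (∀ j ∈ S, j < n) ∧ ∀ j ∈ S, 2 * j % n ∈ S

/-- The extended cyclic code of length `2^m` with exponent set `S`. -/
def extCyclicCode {F : Type*} [Field F] (n : ℕ) (S : Finset ℕ) : Set (F → F) :=
  { c | ∃ A : ℕ → F, (∀ j ∈ S, A (2 * j % n) = A j ^ 2) ∧
      ∀ x : F, c x = ∑ j ∈ S, A j * x ^ j }

/-- The set of derivatives of the codewords of `C` in direction `β`. -/
def derivSet {F : Type*} [Field F] (β : F) (C : Set (F → F)) : Set (F → F) :=
  { d | ∃ c ∈ C, d = fun x => c (x + β) - c x }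

/-- Minimum Hamming distance (= minimum weight) of a code. -/
noncomputable def minDist {F : Type*} [Field F] [Fintype F] [DecidableEq F]
    (C : Set (F → F)) : ℕ :=
  sInf { w | ∃ c ∈ C, c ≠ (0 : F → F) ∧ hammingNorm c = w }



/-! ### Auxiliary lemmas -/

section Aux
open Finset

lemma cdd_or_eq_iff_testBit {k j : ℕ} :
    k ||| j = j ↔ ∀ i, k.testBit i = true → j.testBit i = true := by
  constructor
  · intro h i hi
    have h2 := congrArg (fun t => t.testBit i) h
    simpa [Nat.testBit_or, hi] using h2
  · intro h
    apply Nat.eq_of_testBit_eq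
    intro i
    rw [Nat.testBit_or]
    cases hk : k.testBit i
    · simp
    · simp [h i hk]

lemma cdd_le_of_submask {k j : ℕ} (h : k ||| j = j) : k ≤ j := by
  have hand : k &&& j = k := by
    apply Nat.eq_of_testBit_eq
    intro i
    rw [Nat.testBit_and]
    cases hk : k.testBit i
    · simp
    · simp [cdd_or_eq_iff_testBit.mp h i hk]
  calc k = k &&& j := hand.symm
  _ ≤ j := Nat.and_le_right

lemma cdd_choose_mod_two : ∀ j k : ℕ, Nat.choose j k % 2 = 1 ↔ k ||| j = j := by
  intro j
  induction j using Nat.strong_induction_on with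
  | _ j IH =>
    intro k
    rcases Nat.eq_zero_or_pos j with hj | hj
    · subst hj
      rcases Nat.eq_zero_or_pos k with hk | hk
      · simp [hk]
      · have h1 : Nat.choose 0 k = 0 := Nat.choose_eq_zero_of_lt hk
        simp only [h1]
        constructor
        · intro h; omega
        · intro h; exact absurd (cdd_le_of_submask h) (by omega)
    · have hlucas := (Choose.choose_modEq_choose_mod_mul_choose_div_nat (p := 2) (n := j) (k := k))
      have hd2 : j / 2 < j := Nat.div_lt_self hj (by norm_num)
      have IH2 := IH (j / 2) hd2 (k / 2)
      have hsplit : k ||| j = j ↔ ((k % 2 = 1 → j % 2 = 1) ∧ (k / 2 ||| j / 2 = j / 2)) := by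
        rw [cdd_or_eq_iff_testBit, cdd_or_eq_iff_testBit]
        constructor
        · intro h
          constructor
          · intro hk1
            have := h 0 (by simp [Nat.testBit_zero, hk1])
            simpa [Nat.testBit_zero] using this
          · intro i hi
            have := h (i + 1) (by simpa [Nat.testBit_add_one] using hi)
            simpa [Nat.testBit_add_one] using this
        · rintro ⟨h0, hs⟩ i hi
          cases i with
          | zero =>
            simp only [Nat.testBit_zero, decide_eq_true_eq] at hi ⊢
            exact h0 hi
          | succ i =>
            simp only [Nat.testBit_add_one] at hi ⊢
            exact hs i hi
      rw [Nat.ModEq] at hlucas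
      rw [hlucas, Nat.mul_mod, hsplit, ← IH2]
      have hj2 := Nat.mod_two_eq_zero_or_one j
      have hk2 := Nat.mod_two_eq_zero_or_one k
      rcases hj2 with h | h <;> rcases hk2 with h' | h' <;> simp [h, h']

lemma cdd_cast_choose_char2 {R : Type*} [CommRing R] [CharP R 2] (j k : ℕ) :
    ((Nat.choose j k : ℕ) : R) = if k ||| j = j then 1 else 0 := by
  have hmod : ((Nat.choose j k : ℕ) : R) = ((Nat.choose j k % 2 : ℕ) : R) := by
    conv_lhs => rw [← Nat.div_add_mod (Nat.choose j k) 2]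
    push_cast
    rw [show (2 : R) = 0 from CharP.cast_eq_zero R 2]
    ring
  rw [hmod]
  split_ifs with hsub
  · rw [(cdd_choose_mod_two j k).mpr hsub]; norm_num
  · have : Nat.choose j k % 2 = 0 := by
      have := Nat.mod_two_eq_zero_or_one (Nat.choose j k)
      rcases this with h | h
      · exact h
      · exact absurd ((cdd_choose_mod_two j k).mp h) hsub
    rw [this]; norm_num

lemma cdd_char2_add_pow {R : Type*} [CommRing R] [CharP R 2] (x y : R) (j : ℕ) :
    (x + y) ^ j =
      ∑ k ∈ (Finset.range (j + 1)).filter (fun k => k ||| j = j), x ^ k * y ^ (j - k) := by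
  rw [add_pow, Finset.sum_filter]
  apply Finset.sum_congr rfl
  intro k _
  rw [cdd_cast_choose_char2]
  split_ifs <;> simp

section rot
variable {m : ℕ}

lemma cdd_two_pow_sub_one_pos (hm : 0 < m) : 0 < 2 ^ m - 1 := by
  have : 2 ≤ 2 ^ m := by
    calc 2 = 2 ^ 1 := (pow_one 2).symm
    _ ≤ 2 ^ m := Nat.pow_le_pow_right (by norm_num) hm
  omega

lemma cdd_rot_testBit (hm : 0 < m) {j : ℕ} (hj : j < 2 ^ m - 1) {i : ℕ} (hi : i < m) :
    (2 * j % (2 ^ m - 1)).testBit i = j.testBit ((i + (m - 1)) % m) := by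
  set n := 2 ^ m - 1 with hn
  have h2m : 2 ^ m = 2 * 2 ^ (m - 1) := by
    conv_lhs => rw [show m = (m - 1) + 1 by omega]
    rw [pow_succ]; ring
  by_cases htop : j < 2 ^ (m - 1)
  · have hlt : 2 * j < n := by omega
    rw [Nat.mod_eq_of_lt hlt]
    cases i with
    | zero =>
      have h1 : (2 * j).testBit 0 = false := by
        simp [Nat.testBit_zero, Nat.mul_mod_right]
      have h2 : j.testBit ((0 + (m - 1)) % m) = false := by
        rw [Nat.zero_add, Nat.mod_eq_of_lt (by omega)]
        exact Nat.testBit_lt_two_pow htop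
      rw [h1, h2]
    | succ i =>
      rw [Nat.testBit_add_one, Nat.mul_div_cancel_left _ (by norm_num)]
      congr 1
      have : i + 1 + (m - 1) = i + m := by omega
      rw [this, Nat.add_mod_right, Nat.mod_eq_of_lt (by omega)]
  · set r := j - 2 ^ (m - 1) with hr
    have hrlt : r < 2 ^ (m - 1) := by omega
    have hmod : 2 * j % n = 2 * r + 1 := by
      have : 2 * j = n + (2 * r + 1) := by omega
      rw [this, Nat.add_mod_left, Nat.mod_eq_of_lt (by omega)]
    rw [hmod]
    cases i with
    | zero =>
      have h1 : (2 * r + 1).testBit 0 = true := by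
        simp [Nat.testBit_zero, Nat.mul_add_mod]
      have h2 : j.testBit ((0 + (m - 1)) % m) = true := by
        rw [Nat.zero_add, Nat.mod_eq_of_lt (by omega), Nat.testBit_eq_decide_div_mod_eq]
        have : j / 2 ^ (m - 1) = 1 := by
          apply Nat.div_eq_of_lt_le <;> omega
        simp [this]
      rw [h1, h2]
    | succ i =>
      have him : i < m - 1 := by omega
      have hdiv : (2 * r + 1) / 2 = r := by omega
      have hidx : (i + 1 + (m - 1)) % m = i := by
        have h' : i + 1 + (m - 1) = i + m := by omega
        rw [h', Nat.add_mod_right, Nat.mod_eq_of_lt (by omega)]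
      rw [Nat.testBit_add_one, hdiv, hidx, Nat.testBit_eq_decide_div_mod_eq, Nat.testBit_eq_decide_div_mod_eq]
      have hj_eq : j = 2 ^ i * 2 ^ (m - 1 - i) + r := by
        rw [← pow_add]
        have h' : i + (m - 1 - i) = m - 1 := by omega
        rw [h']; omega
      have hdd : j / 2 ^ i = 2 ^ (m - 1 - i) + r / 2 ^ i := by
        rw [hj_eq, Nat.mul_add_div (Nat.two_pow_pos i)]
      have heven : 2 ^ (m - 1 - i) = 2 * 2 ^ (m - 1 - i - 1) := by
        rw [← pow_succ']
        congr 1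
        omega
      have hfin : j / 2 ^ i % 2 = r / 2 ^ i % 2 := by
        rw [hdd]
        omega
      rw [hfin]

lemma cdd_idx1 (hm : 0 < m) {a : ℕ} (ha : a < m) : ((a + 1) % m + (m - 1)) % m = a := by
  have h : a + 1 + (m - 1) = a + m := by omega
  rw [Nat.mod_add_mod, h, Nat.add_mod_right, Nat.mod_eq_of_lt ha]

lemma cdd_idx2 (hm : 0 < m) {a : ℕ} (ha : a < m) : ((a + (m - 1)) % m + 1) % m = a := by
  have h : a + (m - 1) + 1 = a + m := by omega
  rw [Nat.mod_add_mod, h, Nat.add_mod_right, Nat.mod_eq_of_lt ha]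

lemma cdd_wtm_dbl (hm : 0 < m) {j : ℕ} (hj : j < 2 ^ m - 1) :
    wtm m (2 * j % (2 ^ m - 1)) = wtm m j := by
  unfold wtm
  apply Finset.card_bij' (fun i _ => (i + (m - 1)) % m) (fun i _ => (i + 1) % m)
  · intro a ha
    simp only [Finset.mem_filter, Finset.mem_range] at ha ⊢
    refine ⟨Nat.mod_lt _ hm, ?_⟩
    rw [← cdd_rot_testBit hm hj ha.1]
    exact ha.2
  · intro a ha
    simp only [Finset.mem_filter, Finset.mem_range] at ha ⊢
    refine ⟨Nat.mod_lt _ hm, ?_⟩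
    rw [cdd_rot_testBit hm hj (Nat.mod_lt _ hm), cdd_idx1 hm ha.1]
    exact ha.2
  · intro a ha
    simp only [Finset.mem_filter, Finset.mem_range] at ha
    exact cdd_idx2 hm ha.1
  · intro a ha
    simp only [Finset.mem_filter, Finset.mem_range] at ha
    exact cdd_idx1 hm ha.1

lemma cdd_submask_dbl (hm : 0 < m) {k j : ℕ} (hk : k < 2 ^ m - 1) (hj : j < 2 ^ m - 1)
    (h : k ||| j = j) :
    (2 * k % (2 ^ m - 1)) ||| (2 * j % (2 ^ m - 1)) = 2 * j % (2 ^ m - 1) := by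
  rw [cdd_or_eq_iff_testBit] at h ⊢
  intro i hi
  by_cases him : i < m
  · rw [cdd_rot_testBit hm hk him] at hi
    rw [cdd_rot_testBit hm hj him]
    exact h _ hi
  · exfalso
    have hlt : 2 * k % (2 ^ m - 1) < 2 ^ i := by
      calc 2 * k % (2 ^ m - 1) < 2 ^ m - 1 := Nat.mod_lt _ (cdd_two_pow_sub_one_pos hm)
      _ < 2 ^ m := by omega
      _ ≤ 2 ^ i := Nat.pow_le_pow_right (by norm_num) (by omega)
    rw [Nat.testBit_lt_two_pow hlt] at hi
    exact Bool.false_ne_true hi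

lemma cdd_submask_undbl (hm : 0 < m) {k j : ℕ} (hk : k < 2 ^ m - 1) (hj : j < 2 ^ m - 1)
    (h : (2 * k % (2 ^ m - 1)) ||| (2 * j % (2 ^ m - 1)) = 2 * j % (2 ^ m - 1)) :
    k ||| j = j := by
  rw [cdd_or_eq_iff_testBit] at h ⊢
  intro i hi
  by_cases him : i < m
  · have h1 := h ((i + 1) % m)
    rw [cdd_rot_testBit hm hk (Nat.mod_lt _ hm), cdd_rot_testBit hm hj (Nat.mod_lt _ hm),
      cdd_idx1 hm him] at h1
    exact h1 hi
  · exfalso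
    have hlt : k < 2 ^ i := by
      calc k < 2 ^ m - 1 := hk
      _ < 2 ^ m := by omega
      _ ≤ 2 ^ i := Nat.pow_le_pow_right (by norm_num) (by omega)
    rw [Nat.testBit_lt_two_pow hlt] at hi
    exact Bool.false_ne_true hi

lemma cdd_mul_mod_one_side {x y n : ℕ} (hx : x % n = 1 % n) : x * y % n = y % n := by
  rw [Nat.mul_mod, hx, ← Nat.mul_mod, one_mul]

lemma cdd_two_pow_m_mod (hm : 0 < m) : 2 ^ m % (2 ^ m - 1) = 1 % (2 ^ m - 1) := by
  have h1 : 0 < 2 ^ m - 1 := cdd_two_pow_sub_one_pos hm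
  have h : 2 ^ m = (2 ^ m - 1) + 1 := by omega
  nth_rewrite 1 [h]
  rw [Nat.add_mod_left]

lemma cdd_pow_two_cycle (hm : 0 < m) (a j : ℕ) :
    2 ^ a * j % (2 ^ m - 1) = 2 ^ (a % m) * j % (2 ^ m - 1) := by
  have hdecomp : (2 : ℕ) ^ a = (2 ^ m) ^ (a / m) * 2 ^ (a % m) := by
    rw [← pow_mul, ← pow_add]
    congr 1
    exact (Nat.div_add_mod a m).symm ▸ rfl
  rw [hdecomp, mul_assoc]
  apply cdd_mul_mod_one_side
  rw [Nat.pow_mod, cdd_two_pow_m_mod hm, ← Nat.pow_mod, one_pow]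

lemma cdd_mul_mod_right_arg (a x n : ℕ) : a * (x % n) % n = a * x % n := by
  rw [Nat.mul_mod, Nat.mod_mod_of_dvd _ dvd_rfl, ← Nat.mul_mod]

lemma cdd_undbl (hm : 0 < m) {j : ℕ} (hj : j < 2 ^ m - 1) :
    2 ^ (m - 1) * (2 * j % (2 ^ m - 1)) % (2 ^ m - 1) = j := by
  have h1 : 2 ^ (m - 1) * (2 * j % (2 ^ m - 1)) % (2 ^ m - 1)
      = 2 ^ (m - 1) * (2 * j) % (2 ^ m - 1) := cdd_mul_mod_right_arg _ _ _
  have h2 : 2 ^ (m - 1) * (2 * j) = 2 ^ m * j := by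
    rw [← mul_assoc, ← pow_succ]
    congr 2
    omega
  rw [h1, h2, cdd_pow_two_cycle hm, Nat.mod_self, pow_zero, one_mul, Nat.mod_eq_of_lt hj]

lemma cdd_redbl (hm : 0 < m) {j : ℕ} (hj : j < 2 ^ m - 1) :
    2 * (2 ^ (m - 1) * j % (2 ^ m - 1)) % (2 ^ m - 1) = j := by
  rw [cdd_mul_mod_right_arg, ← mul_assoc]
  have h2 : 2 * 2 ^ (m - 1) = 2 ^ m := by
    rw [← pow_succ']
    congr 1
    omega
  rw [h2, cdd_pow_two_cycle hm, Nat.mod_self, pow_zero, one_mul, Nat.mod_eq_of_lt hj]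

lemma cdd_dbl_inj (hm : 0 < m) {k j : ℕ} (hk : k < 2 ^ m - 1) (hj : j < 2 ^ m - 1)
    (h : 2 * k % (2 ^ m - 1) = 2 * j % (2 ^ m - 1)) : k = j := by
  have := cdd_undbl hm hk
  rw [h, cdd_undbl hm hj] at this
  exact this.symm

lemma cdd_exists_diff_bit {k j : ℕ} (hne : k ≠ j) : ∃ i, k.testBit i ≠ j.testBit i := by
  by_contra h
  push_neg at h
  exact hne (Nat.eq_of_testBit_eq fun i => h i)

lemma cdd_wtm_lt_of_ssubmask {k j : ℕ} (hj : j < 2 ^ m) (hsub : k ||| j = j) (hne : k ≠ j) :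
    wtm m k < wtm m j := by
  apply Finset.card_lt_card
  have hsubs : (Finset.range m).filter (fun i => k.testBit i) ⊆
      (Finset.range m).filter (fun i => j.testBit i) := by
    intro i hi
    simp only [Finset.mem_filter, Finset.mem_range] at hi ⊢
    exact ⟨hi.1, cdd_or_eq_iff_testBit.mp hsub i hi.2⟩
  rw [Finset.ssubset_iff_of_subset hsubs]
  obtain ⟨i, hi⟩ := cdd_exists_diff_bit hne
  have hki : k.testBit i = false := by
    cases hk : k.testBit i
    · rfl
    · have := cdd_or_eq_iff_testBit.mp hsub i hk
      rw [hk, this] at hi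
      exact absurd rfl hi
  have hji : j.testBit i = true := by
    cases hjj : j.testBit i
    · rw [hki, hjj] at hi; exact absurd rfl hi
    · rfl
  have him : i < m := by
    by_contra h
    rw [Nat.testBit_lt_two_pow
      (lt_of_lt_of_le hj (Nat.pow_le_pow_right (by norm_num) (by omega)))] at hji
    exact Bool.false_ne_true hji
  exact ⟨i, by simp [Finset.mem_filter, Finset.mem_range, him, hji, hki]⟩

lemma cdd_card_wtm_fiber_le (N : Finset ℕ) (hN : ∀ k ∈ N, k < 2 ^ m) (i : ℕ) :
    (N.filter (fun k => wtm m k = i)).card ≤ m.choose i := by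
  have hpc : ((Finset.range m).powersetCard i).card = m.choose i := by
    rw [Finset.card_powersetCard, Finset.card_range]
  rw [← hpc]
  apply Finset.card_le_card_of_injOn (fun k => (Finset.range m).filter (fun t => k.testBit t))
  · intro k hk
    simp only [Finset.mem_coe, Finset.mem_filter] at hk ⊢
    rw [Finset.mem_powersetCard]
    exact ⟨Finset.filter_subset _ _, hk.2⟩
  · intro k hk k' hk' heq
    simp only [Finset.mem_coe, Finset.mem_filter] at hk hk'
    apply Nat.eq_of_testBit_eq
    intro t
    by_cases ht : t < m
    · have h1 := Finset.ext_iff.mp heq t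
      simp only [Finset.mem_filter, Finset.mem_range, ht, true_and] at h1
      cases hb : k'.testBit t
      · cases hb2 : k.testBit t
        · rfl
        · exact absurd (h1.mp hb2) (by rw [hb]; exact Bool.false_ne_true)
      · rw [h1.mpr hb]
    · rw [Nat.testBit_lt_two_pow, Nat.testBit_lt_two_pow]
      · exact lt_of_lt_of_le (hN k' hk'.1) (Nat.pow_le_pow_right (by norm_num) (by omega))
      · exact lt_of_lt_of_le (hN k hk.1) (Nat.pow_le_pow_right (by norm_num) (by omega))

lemma cdd_card_filter_wtm_lt_le (N : Finset ℕ) (hN : ∀ k ∈ N, k < 2 ^ m) (d : ℕ) :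
    (N.filter (fun k => wtm m k < d)).card ≤ ∑ i ∈ Finset.range d, m.choose i := by
  set T := N.filter (fun k => wtm m k < d) with hT
  have h1 : T.card = ∑ i ∈ Finset.range d, (T.filter (fun k => wtm m k = i)).card := by
    apply Finset.card_eq_sum_card_fiberwise
    intro k hk
    rw [hT, Finset.mem_coe, Finset.mem_filter] at hk
    rw [Finset.mem_coe, Finset.mem_range]
    exact hk.2
  rw [h1]
  apply Finset.sum_le_sum
  intro i _
  have hss : T.filter (fun k => wtm m k = i) ⊆ N.filter (fun k => wtm m k = i) := by
    intro k hk
    simp only [hT, Finset.mem_filter] at hk ⊢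
    exact ⟨hk.1.1, hk.2⟩
  exact le_trans (Finset.card_le_card hss) (cdd_card_wtm_fiber_le N hN i)

lemma cdd_mem_coset_self (hm : 0 < m) {s : ℕ} (hs : s < 2 ^ m - 1) :
    s ∈ cycCoset (2 ^ m - 1) m s := by
  rw [cycCoset, Finset.mem_image]
  exact ⟨0, Finset.mem_range.mpr hm, by rw [pow_zero, one_mul, Nat.mod_eq_of_lt hs]⟩

lemma cdd_coset_lt (hm : 0 < m) {s t : ℕ} (ht : t ∈ cycCoset (2 ^ m - 1) m s) :
    t < 2 ^ m - 1 := by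
  rw [cycCoset, Finset.mem_image] at ht
  obtain ⟨j, _, rfl⟩ := ht
  exact Nat.mod_lt _ (cdd_two_pow_sub_one_pos hm)

lemma cdd_coset_dbl (hm : 0 < m) {s t : ℕ} (ht : t ∈ cycCoset (2 ^ m - 1) m s) :
    2 * t % (2 ^ m - 1) ∈ cycCoset (2 ^ m - 1) m s := by
  rw [cycCoset, Finset.mem_image] at ht ⊢
  obtain ⟨j, hj, rfl⟩ := ht
  refine ⟨(j + 1) % m, Finset.mem_range.mpr (Nat.mod_lt _ hm), ?_⟩
  rw [cdd_mul_mod_right_arg, ← mul_assoc, ← pow_succ', ← cdd_pow_two_cycle hm]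

lemma cdd_coset_undbl (hm : 0 < m) {s t : ℕ} (htn : t < 2 ^ m - 1)
    (ht : 2 * t % (2 ^ m - 1) ∈ cycCoset (2 ^ m - 1) m s) :
    t ∈ cycCoset (2 ^ m - 1) m s := by
  rw [cycCoset, Finset.mem_image] at ht ⊢
  obtain ⟨j, hj, hjt⟩ := ht
  refine ⟨(m - 1 + j) % m, Finset.mem_range.mpr (Nat.mod_lt _ hm), ?_⟩
  rw [← cdd_pow_two_cycle hm, pow_add, mul_assoc]
  calc 2 ^ (m - 1) * (2 ^ j * s) % (2 ^ m - 1)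
      = 2 ^ (m - 1) * (2 ^ j * s % (2 ^ m - 1)) % (2 ^ m - 1) :=
        (cdd_mul_mod_right_arg _ _ _).symm
  _ = 2 ^ (m - 1) * (2 * t % (2 ^ m - 1)) % (2 ^ m - 1) := by rw [hjt]
  _ = t := cdd_undbl hm htn

lemma cdd_coset_subset {S : Finset ℕ} (hlt : ∀ j ∈ S, j < 2 ^ m - 1)
    (hcl : ∀ j ∈ S, 2 * j % (2 ^ m - 1) ∈ S) {s : ℕ} (hs : s ∈ S) :
    cycCoset (2 ^ m - 1) m s ⊆ S := by
  intro t ht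
  rw [cycCoset, Finset.mem_image] at ht
  obtain ⟨j, hjr, rfl⟩ := ht
  clear hjr
  induction j with
  | zero => rw [pow_zero, one_mul, Nat.mod_eq_of_lt (hlt s hs)]; exact hs
  | succ j IH =>
    have hstep : 2 ^ (j + 1) * s % (2 ^ m - 1) = 2 * (2 ^ j * s % (2 ^ m - 1)) % (2 ^ m - 1) := by
      rw [cdd_mul_mod_right_arg, ← mul_assoc, ← pow_succ']
    rw [hstep]
    exact hcl _ IH

lemma cdd_pow_mem (hm : 0 < m) {S : Finset ℕ} (hlt : ∀ j ∈ S, j < 2 ^ m - 1)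
    (hcl : ∀ j ∈ S, 2 * j % (2 ^ m - 1) ∈ S) {s : ℕ} (hs : s ∈ S) (a : ℕ) :
    2 ^ a * s % (2 ^ m - 1) ∈ S := by
  apply cdd_coset_subset hlt hcl hs
  rw [cycCoset, Finset.mem_image]
  refine ⟨a % m, Finset.mem_range.mpr (Nat.mod_lt _ hm), (cdd_pow_two_cycle hm a s).symm⟩

end rot

section poly
variable {F : Type*} [Field F] [Fintype F]

lemma cdd_coeff_zero_of_fun_zero (U : Finset ℕ) (hU : ∀ k ∈ U, k < Fintype.card F) (g : ℕ → F)
    (h : ∀ x : F, ∑ k ∈ U, g k * x ^ k = 0) : ∀ k ∈ U, g k = 0 := by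
  classical
  set p : Polynomial F := ∑ k ∈ U, Polynomial.C (g k) * Polynomial.X ^ k with hp
  have heval : ∀ x : F, p.eval x = 0 := by
    intro x
    rw [hp, Polynomial.eval_finset_sum]
    simpa using h x
  have hdeg : p.natDegree < Fintype.card F := by
    have h0 : 0 < Fintype.card F := Fintype.card_pos
    apply Nat.lt_of_le_of_lt (Polynomial.natDegree_sum_le_of_forall_le U _ ?_)
      (by omega : Fintype.card F - 1 < Fintype.card F)
    intro k hk
    apply le_trans (Polynomial.natDegree_C_mul_le _ _)
    rw [Polynomial.natDegree_X_pow]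
    have := hU k hk
    omega
  have hp0 : p = 0 := by
    apply Polynomial.eq_zero_of_natDegree_lt_card_of_eval_eq_zero' p Finset.univ
      (fun x _ => heval x)
    rwa [Finset.card_univ]
  intro k hk
  have hck : p.coeff k = g k := by
    rw [hp, Polynomial.finset_sum_coeff]
    have hterm : ∀ j ∈ U, (Polynomial.C (g j) * Polynomial.X ^ j).coeff k
        = if j = k then g j else 0 := by
      intro j _
      rw [Polynomial.coeff_C_mul, Polynomial.coeff_X_pow]
      by_cases hjk : j = k
      · simp [hjk]
      · have hkj : ¬ (k = j) := fun h' => hjk h'.symm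
        simp [hjk, hkj]
    rw [Finset.sum_congr rfl hterm, Finset.sum_ite_eq' U k (fun j => g j), if_pos hk]
  rw [← hck, hp0, Polynomial.coeff_zero]

lemma cdd_pow_eq_of_mod_eq {β : F} {nn : ℕ} (hβn : β ^ nn = 1) {u v : ℕ}
    (h : u % nn = v % nn) : β ^ u = β ^ v := by
  conv_lhs => rw [← Nat.div_add_mod u nn]
  conv_rhs => rw [← Nat.div_add_mod v nn]
  rw [pow_add, pow_mul, hβn, one_pow, one_mul, pow_add, pow_mul, hβn, one_pow, one_mul, h]

lemma cdd_sub_mod_eq {a b n : ℕ} (hba : b ≤ a) (hmod : b % n ≤ a % n) :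
    (a - b) % n = (a % n - b % n) % n := by
  have hz : (((a - b) % n : ℕ) : ℤ) = (((a % n - b % n) % n : ℕ) : ℤ) := by
    push_cast [Nat.cast_sub hba, Nat.cast_sub hmod]
    exact Int.sub_emod _ _ _
  exact_mod_cast hz
end poly

lemma cdd_deriv_mem {m : ℕ} (hm : 0 < m) {F : Type*} [Field F] [Fintype F] [CharP F 2]
    (hF : Fintype.card F = 2 ^ m) {β : F} (hβ : β ≠ 0) (S : Finset ℕ)
    (hS : IsExpSet (2 ^ m - 1) S) (c : F → F)
    (hc : c ∈ extCyclicCode (F := F) (2 ^ m - 1) S) :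
    (fun x => c (x + β) - c x) ∈ extCyclicCode (F := F) (2 ^ m - 1)
      ((Finset.range (2 ^ m - 1)).filter (fun k => wtm m k < S.sup (wtm m))) := by
  classical
  haveI : Fact (Nat.Prime 2) := ⟨Nat.prime_two⟩
  haveI : ExpChar F 2 := ExpChar.prime Nat.prime_two
  set n := 2 ^ m - 1 with hndef
  have hn0 : 0 < n := cdd_two_pow_sub_one_pos hm
  set d := S.sup (wtm m) with hd
  set T := (Finset.range n).filter (fun k => wtm m k < d) with hT
  obtain ⟨A, hA, hAc⟩ := hc
  have hβn : β ^ n = 1 := by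
    have := FiniteField.pow_card_sub_one_eq_one β hβ
    rwa [hF] at this
  set B : ℕ → F := fun k => ∑ j ∈ S.filter (fun j => k ||| j = j ∧ k ≠ j), A j * β ^ (j - k)
    with hB
  have hBzero : ∀ k, k < n → ¬ (wtm m k < d) → B k = 0 := by
    intro k hkn hkw
    simp only [hB]
    have hempty : S.filter (fun j => k ||| j = j ∧ k ≠ j) = ∅ := by
      rw [Finset.filter_eq_empty_iff]
      intro j hjS
      rintro ⟨hsub, hne⟩
      apply hkw
      calc wtm m k < wtm m j := by
            apply cdd_wtm_lt_of_ssubmask _ hsub hne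
            have := hS.1 j hjS
            omega
      _ ≤ d := Finset.le_sup hjS
    rw [hempty, Finset.sum_empty]
  refine ⟨B, ?_, ?_⟩
  · -- closure property
    intro k hk
    rw [hT, Finset.mem_filter, Finset.mem_range] at hk
    obtain ⟨hkn, hkw⟩ := hk
    have hsq : B k ^ 2 = ∑ j ∈ S.filter (fun j => k ||| j = j ∧ k ≠ j),
        (A j * β ^ (j - k)) ^ 2 := by
      simp only [hB]
      exact sum_pow_char (R := F) (p := 2) _ _
    rw [hsq]
    simp only [hB]
    symm
    apply Finset.sum_nbij' (fun j => 2 * j % n) (fun j' => 2 ^ (m - 1) * j' % n)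
    · intro j hj
      rw [Finset.mem_filter] at hj ⊢
      obtain ⟨hjS, hjsub, hjne⟩ := hj
      have hjn : j < n := hS.1 j hjS
      refine ⟨hS.2 j hjS, cdd_submask_dbl hm hkn hjn hjsub, ?_⟩
      intro heq
      exact hjne (cdd_dbl_inj hm hkn hjn heq)
    · intro j' hj'
      rw [Finset.mem_filter] at hj' ⊢
      obtain ⟨hj'S, hj'sub, hj'ne⟩ := hj'
      have hj'n : j' < n := hS.1 j' hj'S
      have humem : 2 ^ (m - 1) * j' % n ∈ S := cdd_pow_mem hm hS.1 hS.2 hj'S (m - 1)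
      have hun : 2 ^ (m - 1) * j' % n < n := hS.1 _ humem
      have hre : 2 * (2 ^ (m - 1) * j' % n) % n = j' := cdd_redbl hm hj'n
      refine ⟨humem, ?_, ?_⟩
      · apply cdd_submask_undbl hm hkn hun
        rw [hre]
        exact hj'sub
      · intro heq
        apply hj'ne
        rw [← hre, ← heq]
    · intro j hj
      rw [Finset.mem_filter] at hj
      exact cdd_undbl hm (hS.1 j hj.1)
    · intro j' hj'
      rw [Finset.mem_filter] at hj'
      exact cdd_redbl hm (hS.1 j' hj'.1)
    · intro j hj
      rw [Finset.mem_filter] at hj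
      obtain ⟨hjS, hjsub, hjne⟩ := hj
      have hjn : j < n := hS.1 j hjS
      have hkj : k ≤ j := cdd_le_of_submask hjsub
      rw [mul_pow, ← pow_mul, hA j hjS]
      congr 1
      have h2 : (j - k) * 2 = 2 * j - 2 * k := by omega
      rw [h2]
      apply cdd_pow_eq_of_mod_eq hβn
      have hsub2 : (2 * k % n) ||| (2 * j % n) = 2 * j % n := cdd_submask_dbl hm hkn hjn hjsub
      have hle2 : 2 * k % n ≤ 2 * j % n := cdd_le_of_submask hsub2
      have e1 : (2 * j - 2 * k) % n = (2 * j % n - 2 * k % n) % n :=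
        cdd_sub_mod_eq (by omega) hle2
      exact e1
  · -- function identity
    intro x
    have hQ : ∀ j ∈ S, ((x + β) ^ j - x ^ j : F)
        = ∑ k ∈ (Finset.range n).filter (fun k => k ||| j = j ∧ k ≠ j),
            β ^ (j - k) * x ^ k := by
      intro j hjS
      have hjn : j < n := hS.1 j hjS
      have hexpand := cdd_char2_add_pow x β j
      have hsplit : (Finset.range (j + 1)).filter (fun k => k ||| j = j)
          = insert j ((Finset.range (j + 1)).filter (fun k => k ||| j = j ∧ k ≠ j)) := by
        apply Finset.ext
        intro k
        simp only [Finset.mem_insert, Finset.mem_filter, Finset.mem_range]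
        constructor
        · rintro ⟨hk1, hk2⟩
          by_cases hkj : k = j
          · exact Or.inl hkj
          · exact Or.inr ⟨hk1, hk2, hkj⟩
        · rintro (rfl | ⟨hk1, hk2, hk3⟩)
          · exact ⟨Nat.lt_succ_self _, Nat.or_self _⟩
          · exact ⟨hk1, hk2⟩
      have hjnotmem : j ∉ (Finset.range (j + 1)).filter (fun k => k ||| j = j ∧ k ≠ j) := by
        simp [Finset.mem_filter]
      rw [hsplit, Finset.sum_insert hjnotmem, Nat.sub_self, pow_zero, mul_one] at hexpand
      have hdom : (Finset.range (j + 1)).filter (fun k => k ||| j = j ∧ k ≠ j)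
          = (Finset.range n).filter (fun k => k ||| j = j ∧ k ≠ j) := by
        apply Finset.ext
        intro k
        simp only [Finset.mem_filter, Finset.mem_range]
        constructor
        · rintro ⟨hk1, hk2⟩
          exact ⟨lt_of_le_of_lt (cdd_le_of_submask hk2.1) hjn, hk2⟩
        · rintro ⟨hk1, hk2⟩
          exact ⟨Nat.lt_succ_of_le (cdd_le_of_submask hk2.1), hk2⟩
      rw [hexpand, add_sub_cancel_left, hdom]
      apply Finset.sum_congr rfl
      intro k _
      ring
    show c (x + β) - c x = ∑ k ∈ T, B k * x ^ k
    calc c (x + β) - c x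
        = ∑ j ∈ S, A j * ((x + β) ^ j - x ^ j) := by
          rw [hAc (x + β), hAc x, ← Finset.sum_sub_distrib]
          apply Finset.sum_congr rfl
          intro j _
          ring
    _ = ∑ j ∈ S, ∑ k ∈ Finset.range n,
          (if k ||| j = j ∧ k ≠ j then A j * β ^ (j - k) * x ^ k else 0) := by
          apply Finset.sum_congr rfl
          intro j hjS
          rw [hQ j hjS, Finset.mul_sum, ← Finset.sum_filter]
          apply Finset.sum_congr rfl
          intro k _
          ring
    _ = ∑ k ∈ Finset.range n, ∑ j ∈ S,
          (if k ||| j = j ∧ k ≠ j then A j * β ^ (j - k) * x ^ k else 0) :=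
          Finset.sum_comm
    _ = ∑ k ∈ Finset.range n, B k * x ^ k := by
          apply Finset.sum_congr rfl
          intro k _
          simp only [hB]
          rw [Finset.sum_filter, Finset.sum_mul]
          apply Finset.sum_congr rfl
          intro j _
          split_ifs with h
          · ring
          · rw [zero_mul]
    _ = ∑ k ∈ T, B k * x ^ k := by
          symm
          apply Finset.sum_subset (Finset.filter_subset _ _)
          intro k hk1 hk2
          have hnotw : ¬ (wtm m k < d) := by
            intro h
            exact hk2 (Finset.mem_filter.mpr ⟨hk1, h⟩)
          rw [hBzero k (Finset.mem_range.mp hk1) hnotw, zero_mul]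

end Aux

/-- Proposition 1: let `C` be a nontrivial extended cyclic code (exponent set
`S_C ≠ {0}`) of length `2^m`, and let `k_D` be the dimension of its cyclic
derivative descendant `D(C)` (the smallest extended cyclic code containing the
derivatives of the codewords of `C`, in any nonzero direction); the dimension of
an extended cyclic code equals the size of its exponent set.  Then
`k_D ≤ ∑_{i=0}^{deg(S_C) - 1} binom(m, i)`. -/
theorem dimension_of_cyclicDD (m : ℕ) (hm : 0 < m)
    (n : ℕ) (hn : n = 2 ^ m - 1)
    {F : Type*} [Field F] [Fintype F] (hF : Fintype.card F = 2 ^ m)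
    (S : Finset ℕ) (hS : IsExpSet n S) (hnt : S ≠ {0})
    (SD : Finset ℕ) (hSD : IsExpSet n SD)
    (hcont : ∀ β : F, β ≠ 0 →
      derivSet β (extCyclicCode n S) ⊆ (extCyclicCode n SD : Set (F → F)))
    (hmin : ∀ β : F, β ≠ 0 → ∀ S' : Finset ℕ, IsExpSet n S' →
      derivSet β (extCyclicCode n S) ⊆ (extCyclicCode n S' : Set (F → F)) →
      (extCyclicCode n SD : Set (F → F)) ⊆ extCyclicCode n S') :
    SD.card ≤ ∑ i ∈ Finset.range (S.sup (wtm m)), m.choose i := by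
  classical
  subst hn
  haveI : Fact (Nat.Prime 2) := ⟨Nat.prime_two⟩
  haveI hchar2 : CharP F 2 := by
    haveI hcp := ringChar.charP F
    obtain ⟨k, hkp, hcard⟩ := FiniteField.card F (ringChar F)
    have h2 : ringChar F = 2 := by
      have hdvd : ringChar F ∣ 2 ^ m := by
        rw [← hF, hcard]
        exact dvd_pow_self _ (by exact_mod_cast k.ne_zero)
      exact (Nat.prime_dvd_prime_iff_eq hkp Nat.prime_two).mp (hkp.dvd_of_dvd_pow hdvd)
    exact h2 ▸ hcp
  have hn0 : 0 < 2 ^ m - 1 := cdd_two_pow_sub_one_pos hm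
  set d := S.sup (wtm m) with hd
  set T := (Finset.range (2 ^ m - 1)).filter (fun k => wtm m k < d) with hT
  have hTexp : IsExpSet (2 ^ m - 1) T := by
    constructor
    · intro j hj
      exact Finset.mem_range.mp (Finset.mem_filter.mp hj).1
    · intro j hj
      obtain ⟨hj1, hj2⟩ := Finset.mem_filter.mp hj
      refine Finset.mem_filter.mpr ⟨Finset.mem_range.mpr (Nat.mod_lt _ hn0), ?_⟩
      rw [cdd_wtm_dbl hm (Finset.mem_range.mp hj1)]
      exact hj2
  obtain ⟨β, hβ⟩ := exists_ne (0 : F)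
  have hderiv : derivSet β (extCyclicCode (2 ^ m - 1) S)
      ⊆ extCyclicCode (F := F) (2 ^ m - 1) T := by
    rintro f ⟨c, hc, rfl⟩
    exact cdd_deriv_mem hm hF hβ S hS c hc
  have hcodesub := hmin β hβ T hTexp hderiv
  have hSDT : SD ⊆ T := by
    intro j hj
    have hjn : j < 2 ^ m - 1 := hSD.1 j hj
    set K := cycCoset (2 ^ m - 1) m j with hK
    have hKsub : K ⊆ SD := cdd_coset_subset hSD.1 hSD.2 hj
    have hjK : j ∈ K := cdd_mem_coset_self hm hjn
    set c : F → F := fun x => ∑ t ∈ K, x ^ t with hc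
    have hcmem : c ∈ extCyclicCode (F := F) (2 ^ m - 1) SD := by
      refine ⟨fun t => if t ∈ K then 1 else 0, ?_, ?_⟩
      · intro t htSD
        show (if 2 * t % (2 ^ m - 1) ∈ K then (1 : F) else 0) = (if t ∈ K then (1 : F) else 0) ^ 2
        by_cases htK : t ∈ K
        · rw [if_pos htK, if_pos (cdd_coset_dbl hm htK), one_pow]
        · rw [if_neg htK, if_neg, zero_pow (by norm_num : (2:ℕ) ≠ 0)]
          intro hcon
          exact htK (cdd_coset_undbl hm (hSD.1 t htSD) hcon)
      · intro x
        rw [hc]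
        symm
        calc ∑ t ∈ SD, (if t ∈ K then (1 : F) else 0) * x ^ t
            = ∑ t ∈ SD, (if t ∈ K then x ^ t else 0) := by
              apply Finset.sum_congr rfl
              intro t _
              split_ifs <;> simp
        _ = ∑ t ∈ SD ∩ K, x ^ t := Finset.sum_ite_mem _ _ _
        _ = ∑ t ∈ K, x ^ t := by rw [Finset.inter_eq_right.mpr hKsub]
    obtain ⟨Bc, hBc1, hBc2⟩ := hcodesub hcmem
    set U := K ∪ T with hU
    have hUlt : ∀ t ∈ U, t < Fintype.card F := by
      intro t ht
      rw [hF]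
      rcases Finset.mem_union.mp ht with h | h
      · have := cdd_coset_lt hm h; omega
      · have := Finset.mem_range.mp (Finset.mem_filter.mp h).1; omega
    set g : ℕ → F := fun t => (if t ∈ K then 1 else 0) - (if t ∈ T then Bc t else 0) with hg
    have hzero : ∀ x : F, ∑ t ∈ U, g t * x ^ t = 0 := by
      intro x
      have e1 : ∑ t ∈ U, (if t ∈ K then (1 : F) else 0) * x ^ t = c x := by
        rw [hc]
        calc ∑ t ∈ U, (if t ∈ K then (1 : F) else 0) * x ^ t
            = ∑ t ∈ U, (if t ∈ K then x ^ t else 0) := by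
              apply Finset.sum_congr rfl
              intro t _
              split_ifs <;> simp
        _ = ∑ t ∈ U ∩ K, x ^ t := Finset.sum_ite_mem _ _ _
        _ = ∑ t ∈ K, x ^ t := by rw [Finset.inter_eq_right.mpr Finset.subset_union_left]
      have e2 : ∑ t ∈ U, (if t ∈ T then Bc t else 0) * x ^ t = c x := by
        rw [hBc2 x]
        calc ∑ t ∈ U, (if t ∈ T then Bc t else 0) * x ^ t
            = ∑ t ∈ U, (if t ∈ T then Bc t * x ^ t else 0) := by
              apply Finset.sum_congr rfl
              intro t _
              split_ifs <;> simp
        _ = ∑ t ∈ U ∩ T, Bc t * x ^ t := Finset.sum_ite_mem _ _ _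
        _ = ∑ t ∈ T, Bc t * x ^ t := by rw [Finset.inter_eq_right.mpr Finset.subset_union_right]
      calc ∑ t ∈ U, g t * x ^ t
          = ∑ t ∈ U, ((if t ∈ K then (1 : F) else 0) * x ^ t
              - (if t ∈ T then Bc t else 0) * x ^ t) := by
            apply Finset.sum_congr rfl
            intro t _
            simp only [hg]
            ring
      _ = ∑ t ∈ U, (if t ∈ K then (1 : F) else 0) * x ^ t
            - ∑ t ∈ U, (if t ∈ T then Bc t else 0) * x ^ t := Finset.sum_sub_distrib _ _
      _ = 0 := by rw [e1, e2, sub_self]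
    have hgj := cdd_coeff_zero_of_fun_zero U hUlt g hzero j (Finset.mem_union_left _ hjK)
    simp only [hg] at hgj
    rw [if_pos hjK] at hgj
    by_contra hjT
    rw [if_neg hjT] at hgj
    rw [sub_zero] at hgj
    exact one_ne_zero hgj
  calc SD.card ≤ T.card := Finset.card_le_card hSDT
  _ ≤ ∑ i ∈ Finset.range d, m.choose i := by
      rw [hT]
      apply cdd_card_filter_wtm_lt_le
      intro k hk
      have := Finset.mem_range.mp hk
      omega
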